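/- Let G = (V, E) be a legal dag with |In(G)| = t + 1 ≥ 2, and let P be a directed path in G from an input vertex to an output vertex. Let G' be the digraph obtained from G by deleting the edges of P and then deleting all vertices that have become isolated (in-degree and out-degree both 0). Then G' is a legal dag with |In(G')| = |Out(G')| = t. -/

import Mathlib

open Finset

variable {V : Type} [Fintype V] [DecidableEq V]

/-- The in-degree of a vertex `v` in the digraph with edge set `E`. -/
def dIn (E : Finset (V × V)) (v : V) : ℕ :=
  (univ.filter fun u => (u, v) ∈ E).card

/-- The out-degree of a vertex `v` in the digraph with edge set `E`. -/
def dOut (E : Finset (V × V)) (v : V) : ℕ :=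
  (univ.filter fun u => (v, u) ∈ E).card

/-- The set of input vertices of the digraph with vertex set `Vs` and edge set
`E`: vertices of in-degree 0. -/
def InSet (Vs : Finset V) (E : Finset (V × V)) : Finset V :=
  Vs.filter fun v => dIn E v = 0

/-- The set of output vertices: vertices of out-degree 0. -/
def OutSet (Vs : Finset V) (E : Finset (V × V)) : Finset V :=
  Vs.filter fun v => dOut E v = 0

/-- A digraph is a dag when there is no directed cycle. -/
def IsDag (E : Finset (V × V)) : Prop :=
  ∀ v : V, ¬ Relation.TransGen (fun a b : V => (a, b) ∈ E) v v

/-- A legal dag on vertex set `Vs` with edge set `E`: a nonempty dag with all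
edges inside `Vs`, in which inputs have out-degree 1, outputs have in-degree 1,
and all other vertices are balanced. -/
def IsLegal (Vs : Finset V) (E : Finset (V × V)) : Prop :=
  (∀ e ∈ E, e.1 ∈ Vs ∧ e.2 ∈ Vs) ∧ E ≠ ∅ ∧ IsDag E ∧
    (∀ v ∈ InSet Vs E, dOut E v = 1) ∧
    (∀ v ∈ OutSet Vs E, dIn E v = 1) ∧
    (∀ v ∈ Vs, v ∉ InSet Vs E → v ∉ OutSet Vs E → dIn E v = dOut E v)

/-- A directed path: a nonempty list of pairwise distinct vertices in which
consecutive vertices are joined by an edge. -/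
def IsDiPath (E : Finset (V × V)) (p : List V) : Prop :=
  p ≠ [] ∧ p.Nodup ∧ p.Chain' (fun a b : V => (a, b) ∈ E)

/-- The list of edges traversed by a path. -/
def pathEdges (p : List V) : List (V × V) :=
  p.zip p.tail

section Helpers


lemma pathEdges_map_snd' (p : List V) : (pathEdges p).map Prod.snd = p.tail :=
  List.map_snd_zip (by cases p <;> simp)

lemma pathEdges_map_fst' (p : List V) : (pathEdges p).map Prod.fst = p.dropLast := by
  induction p with
  | nil => rfl
  | cons a q ih =>
    cases q with
    | nil => rfl
    | cons b r =>
      have : pathEdges (a :: b :: r) = (a, b) :: pathEdges (b :: r) := rfl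
      simp [this, ih, List.dropLast]

lemma pathEdges_rel' {R : V → V → Prop} {p : List V} (h : p.Chain' R) :
    ∀ e ∈ pathEdges p, R e.1 e.2 := by
  induction p with
  | nil => simp [pathEdges]
  | cons a q ih =>
    cases q with
    | nil => simp [pathEdges]
    | cons b r =>
      have hch := List.isChain_cons_cons.mp h
      intro e he
      have : pathEdges (a :: b :: r) = (a, b) :: pathEdges (b :: r) := rfl
      rw [this, List.mem_cons] at he
      rcases he with rfl | he
      · exact hch.1
      · exact ih hch.2 e he

lemma count_snd' (L : List (V × V)) (h : (L.map Prod.snd).Nodup) (v : V) :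
    (univ.filter fun a => (a, v) ∈ L.toFinset).card
      = if v ∈ L.map Prod.snd then 1 else 0 := by
  split_ifs with hv
  · obtain ⟨e, heL, hev⟩ := List.mem_map.mp hv
    have : (univ.filter fun a => (a, v) ∈ L.toFinset) = {e.1} := by
      ext a
      simp only [mem_filter, mem_univ, true_and, List.mem_toFinset, mem_singleton]
      constructor
      · intro haL
        have := List.inj_on_of_nodup_map h haL heL (by simp [hev])
        exact congrArg Prod.fst this
      · rintro rfl
        have : e = (e.1, v) := by rw [← hev]
        rwa [← this]
    rw [this]; simp
  · have : (univ.filter fun a => (a, v) ∈ L.toFinset) = ∅ := by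
      ext a
      simp only [mem_filter, mem_univ, true_and, List.mem_toFinset, notMem_empty, iff_false]
      intro haL
      exact hv (List.mem_map.mpr ⟨(a, v), haL, rfl⟩)
    rw [this]; simp

lemma count_fst' (L : List (V × V)) (h : (L.map Prod.fst).Nodup) (v : V) :
    (univ.filter fun b => (v, b) ∈ L.toFinset).card
      = if v ∈ L.map Prod.fst then 1 else 0 := by
  split_ifs with hv
  · obtain ⟨e, heL, hev⟩ := List.mem_map.mp hv
    have : (univ.filter fun b => (v, b) ∈ L.toFinset) = {e.2} := by
      ext b
      simp only [mem_filter, mem_univ, true_and, List.mem_toFinset, mem_singleton]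
      constructor
      · intro hbL
        have := List.inj_on_of_nodup_map h hbL heL (by simp [hev])
        exact congrArg Prod.snd this
      · rintro rfl
        have : e = (v, e.2) := by rw [← hev]
        rwa [← this]
    rw [this]; simp
  · have : (univ.filter fun b => (v, b) ∈ L.toFinset) = ∅ := by
      ext b
      simp only [mem_filter, mem_univ, true_and, List.mem_toFinset, notMem_empty, iff_false]
      intro hbL
      exact hv (List.mem_map.mpr ⟨(v, b), hbL, rfl⟩)
    rw [this]; simp

lemma dIn_sdiff' (E F : Finset (V × V)) (hFE : F ⊆ E) (v : V) :
    dIn (E \ F) v = dIn E v - (univ.filter fun a => (a, v) ∈ F).card := by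
  have h1 : (univ.filter fun a => (a, v) ∈ E \ F)
      = (univ.filter fun a => (a, v) ∈ E) \ (univ.filter fun a => (a, v) ∈ F) := by
    ext a; simp only [mem_filter, mem_univ, true_and, mem_sdiff]
  have h2 : (univ.filter fun a => (a, v) ∈ F) ⊆ (univ.filter fun a => (a, v) ∈ E) := by
    intro a ha; simp only [mem_filter, mem_univ, true_and] at *; exact hFE ha
  rw [dIn, h1, card_sdiff_of_subset h2]; rfl

lemma dOut_sdiff' (E F : Finset (V × V)) (hFE : F ⊆ E) (v : V) :
    dOut (E \ F) v = dOut E v - (univ.filter fun b => (v, b) ∈ F).card := by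
  have h1 : (univ.filter fun b => (v, b) ∈ E \ F)
      = (univ.filter fun b => (v, b) ∈ E) \ (univ.filter fun b => (v, b) ∈ F) := by
    ext b; simp only [mem_filter, mem_univ, true_and, mem_sdiff]
  have h2 : (univ.filter fun b => (v, b) ∈ F) ⊆ (univ.filter fun b => (v, b) ∈ E) := by
    intro b hb; simp only [mem_filter, mem_univ, true_and] at *; exact hFE hb
  rw [dOut, h1, card_sdiff_of_subset h2]; rfl

lemma sum_dIn' (E : Finset (V × V)) : ∑ v, dIn E v = E.card := by
  rw [Finset.card_eq_sum_card_fiberwise (f := Prod.snd) (t := univ) (fun x _ => mem_univ _)]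
  refine (Finset.sum_congr rfl fun v _ => ?_).symm
  rw [dIn]
  refine (Finset.card_bij (fun a _ => (a, v)) ?_ ?_ ?_).symm
  · intro a ha; simp only [mem_filter, mem_univ, true_and] at ha ⊢; exact ⟨ha, trivial⟩
  · intro a _ b _ h; exact (Prod.mk.injEq _ _ _ _).mp h |>.1
  · intro e he
    simp only [mem_filter] at he
    obtain ⟨h1, h2⟩ := he
    subst h2
    exact ⟨e.1, by simpa using h1, rfl⟩

lemma sum_dOut' (E : Finset (V × V)) : ∑ v, dOut E v = E.card := by
  rw [Finset.card_eq_sum_card_fiberwise (f := Prod.fst) (t := univ) (fun x _ => mem_univ _)]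
  refine (Finset.sum_congr rfl fun v _ => ?_).symm
  rw [dOut]
  refine (Finset.card_bij (fun b _ => (v, b)) ?_ ?_ ?_).symm
  · intro b hb; simp only [mem_filter, mem_univ, true_and] at hb ⊢; exact ⟨hb, trivial⟩
  · intro a _ b _ h; exact (Prod.mk.injEq _ _ _ _).mp h |>.2
  · intro e he
    simp only [mem_filter] at he
    obtain ⟨h1, h2⟩ := he
    subst h2
    exact ⟨e.2, by simpa using h1, rfl⟩

lemma card_in_eq_card_out (Vs : Finset V) (E : Finset (V × V))
    (hlegal : IsLegal Vs E) : (InSet Vs E).card = (OutSet Vs E).card := by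
  obtain ⟨hE_sub, -, -, hin1, hout1, hbal⟩ := hlegal
  have key : ∀ v : V, (dOut E v : ℤ) - dIn E v
      = (if v ∈ InSet Vs E then 1 else 0) - (if v ∈ OutSet Vs E then 1 else 0) := by
    intro v
    by_cases hvVs : v ∈ Vs
    · by_cases hvIn : v ∈ InSet Vs E
      · have h1 : dIn E v = 0 := (mem_filter.mp hvIn).2
        have h2 : dOut E v = 1 := hin1 v hvIn
        have h3 : v ∉ OutSet Vs E := by
          intro h; have := (mem_filter.mp h).2; omega
        simp [hvIn, h3, h1, h2]
      · by_cases hvOut : v ∈ OutSet Vs E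
        · have h1 : dOut E v = 0 := (mem_filter.mp hvOut).2
          have h2 : dIn E v = 1 := hout1 v hvOut
          simp [hvIn, hvOut, h1, h2]
        · have h1 := hbal v hvVs hvIn hvOut
          simp [hvIn, hvOut, h1]
    · have h1 : dIn E v = 0 := by
        rw [dIn, card_eq_zero]
        ext a
        simp only [mem_filter, mem_univ, true_and, notMem_empty, iff_false]
        intro ha
        exact hvVs (hE_sub _ ha).2
      have h2 : dOut E v = 0 := by
        rw [dOut, card_eq_zero]
        ext a
        simp only [mem_filter, mem_univ, true_and, notMem_empty, iff_false]
        intro ha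
        exact hvVs (hE_sub _ ha).1
      have h3 : v ∉ InSet Vs E := fun h => hvVs (mem_filter.mp h).1
      have h4 : v ∉ OutSet Vs E := fun h => hvVs (mem_filter.mp h).1
      simp [h1, h2, h3, h4]
    
  have hsum : ∑ v : V, ((dOut E v : ℤ) - dIn E v) = 0 := by
    rw [Finset.sum_sub_distrib]
    have h1 : ∑ v : V, (dOut E v : ℤ) = E.card := by
      rw [← Nat.cast_sum, sum_dOut']
    have h2 : ∑ v : V, (dIn E v : ℤ) = E.card := by
      rw [← Nat.cast_sum, sum_dIn']
    rw [h1, h2]; ring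
  have hsum2 : ∑ v : V, ((if v ∈ InSet Vs E then (1 : ℤ) else 0)
      - (if v ∈ OutSet Vs E then 1 else 0)) = 0 := by
    rw [← Finset.sum_congr rfl fun v _ => key v]; exact hsum
  rw [Finset.sum_sub_distrib] at hsum2
  have h3 : ∑ v : V, (if v ∈ InSet Vs E then (1 : ℤ) else 0) = (InSet Vs E).card := by
    simp [Finset.sum_ite_mem, Finset.univ_inter]
  have h4 : ∑ v : V, (if v ∈ OutSet Vs E then (1 : ℤ) else 0) = (OutSet Vs E).card := by
    simp [Finset.sum_ite_mem, Finset.univ_inter]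
  rw [h3, h4, sub_eq_zero] at hsum2
  exact_mod_cast hsum2

end Helpers

/-- Let `G = (Vs, E)` be a legal dag with `|In(G)| = t + 1 ≥ 2`
and let `P` be a directed path from an input vertex to an output vertex.
Deleting the edges of `P` and then deleting all vertices that have become
isolated yields a legal dag `G'` with `|In(G')| = |Out(G')| = t`. -/
theorem delete_path_legal (Vs : Finset V) (E : Finset (V × V)) (t : ℕ)
    (ht : 1 ≤ t)
    (hlegal : IsLegal Vs E)
    (hcard : (InSet Vs E).card = t + 1)
    (P : List V) (hP : IsDiPath E P)
    (hhead : ∃ u ∈ InSet Vs E, P.head? = some u)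
    (hlast : ∃ w ∈ OutSet Vs E, P.getLast? = some w) :
    IsLegal
        (Vs.filter fun v =>
          ¬(dIn (E \ (pathEdges P).toFinset) v = 0 ∧
            dOut (E \ (pathEdges P).toFinset) v = 0))
        (E \ (pathEdges P).toFinset) ∧
      (InSet
          (Vs.filter fun v =>
            ¬(dIn (E \ (pathEdges P).toFinset) v = 0 ∧
              dOut (E \ (pathEdges P).toFinset) v = 0))
          (E \ (pathEdges P).toFinset)).card = t ∧
      (OutSet
          (Vs.filter fun v =>
            ¬(dIn (E \ (pathEdges P).toFinset) v = 0 ∧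
              dOut (E \ (pathEdges P).toFinset) v = 0))
          (E \ (pathEdges P).toFinset)).card = t := by
  have hOutCard : (OutSet Vs E).card = t + 1 := by
    rw [← card_in_eq_card_out Vs E hlegal]; exact hcard
  obtain ⟨hE_sub, hE_ne, hdag, hin1, hout1, hbal⟩ := hlegal
  obtain ⟨hPne, hPnd, hPch⟩ := hP
  obtain ⟨u, hu, huh⟩ := hhead
  obtain ⟨w, hw, hwl⟩ := hlast
  have huVs : u ∈ Vs := (mem_filter.mp hu).1
  have huIn : dIn E u = 0 := (mem_filter.mp hu).2
  have huOut : dOut E u = 1 := hin1 u hu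
  have hwVs : w ∈ Vs := (mem_filter.mp hw).1
  have hwOut : dOut E w = 0 := (mem_filter.mp hw).2
  have hwIn : dIn E w = 1 := hout1 w hw
  set E' := E \ (pathEdges P).toFinset with hE'def
  set Vs' := Vs.filter fun v => ¬(dIn E' v = 0 ∧ dOut E' v = 0) with hVs'def
  -- basic structure of P
  obtain ⟨a, q, rfl⟩ : ∃ a q, P = a :: q := by
    cases P with
    | nil => exact absurd rfl hPne
    | cons a q => exact ⟨a, q, rfl⟩
  have hua : u = a := by
    simp only [List.head?_cons, Option.some.injEq] at huh
    exact huh.symm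
  subst hua
  have hwlast : w = (u :: q).getLast (by simp) := by
    rw [List.getLast?_eq_getLast (by simp)] at hwl
    exact (Option.some.inj hwl).symm
  have hqne : q ≠ [] := by
    intro h
    subst h
    have : w = u := by simpa using hwlast
    rw [this] at hwOut
    omega
  have huw : u ≠ w := by intro h; rw [h] at huOut; omega
  have hu_tail : u ∉ (u :: q).tail := by
    have := List.nodup_cons.mp hPnd
    simpa using this.1
  have hu_drop : u ∈ (u :: q).dropLast := by
    obtain ⟨b, r, rfl⟩ : ∃ b r, q = b :: r := by
      cases q with
      | nil => exact absurd rfl hqne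
      | cons b r => exact ⟨b, r, rfl⟩
    simp [List.dropLast]
  have hw_tail : w ∈ (u :: q).tail := by
    rw [hwlast, List.getLast_cons hqne]
    simpa using List.getLast_mem hqne
  have hw_drop : w ∉ (u :: q).dropLast := by
    have hdecomp := List.dropLast_append_getLast (l := u :: q) (by simp)
    have hnd : ((u :: q).dropLast ++ [(u :: q).getLast (by simp)]).Nodup := by
      rw [hdecomp]; exact hPnd
    have := (List.nodup_append'.mp hnd).2.2
    intro hmem
    exact this hmem (by rw [hwlast]; simp)
  have hmem_split : ∀ v : V, v ∈ (u :: q) ↔ v ∈ (u :: q).dropLast ∨ v = w := by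
    intro v
    conv_lhs => rw [← List.dropLast_append_getLast (l := u :: q) (by simp)]
    rw [List.mem_append, hwlast]
    simp
  have hmem_split2 : ∀ v : V, v ∈ (u :: q) ↔ v = u ∨ v ∈ (u :: q).tail := by
    intro v; simp
  -- degree formulas
  have hsubF : (pathEdges (u :: q)).toFinset ⊆ E := by
    intro e he
    have := pathEdges_rel' hPch e (List.mem_toFinset.mp he)
    rwa [Prod.mk.eta] at this
  have nodup_snd : ((pathEdges (u :: q)).map Prod.snd).Nodup := by
    rw [pathEdges_map_snd']
    exact hPnd.sublist (List.tail_sublist _)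
  have nodup_fst : ((pathEdges (u :: q)).map Prod.fst).Nodup := by
    rw [pathEdges_map_fst']
    exact hPnd.sublist (List.dropLast_sublist _)
  have hdIn' : ∀ v, dIn E' v = dIn E v - (if v ∈ (u :: q).tail then 1 else 0) := by
    intro v
    rw [hE'def, dIn_sdiff' E _ hsubF, count_snd' _ nodup_snd, pathEdges_map_snd']
  have hdOut' : ∀ v, dOut E' v = dOut E v - (if v ∈ (u :: q).dropLast then 1 else 0) := by
    intro v
    rw [hE'def, dOut_sdiff' E _ hsubF, count_fst' _ nodup_fst, pathEdges_map_fst']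
  have hInPos : ∀ v ∈ (u :: q).tail, 1 ≤ dIn E v := by
    intro v hv
    rw [← pathEdges_map_snd'] at hv
    obtain ⟨e, heL, hev⟩ := List.mem_map.mp hv
    have heE : e ∈ E := hsubF (List.mem_toFinset.mpr heL)
    have : e.1 ∈ univ.filter fun a => (a, v) ∈ E := by
      simp only [mem_filter, mem_univ, true_and]
      rw [← hev]
      simpa using heE
    rw [dIn]
    exact card_pos.mpr ⟨e.1, this⟩
  have hOutPos : ∀ v ∈ (u :: q).dropLast, 1 ≤ dOut E v := by
    intro v hv
    rw [← pathEdges_map_fst'] at hv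
    obtain ⟨e, heL, hev⟩ := List.mem_map.mp hv
    have heE : e ∈ E := hsubF (List.mem_toFinset.mpr heL)
    have : e.2 ∈ univ.filter fun b => (v, b) ∈ E := by
      simp only [mem_filter, mem_univ, true_and]
      rw [← hev]
      simpa using heE
    rw [dOut]
    exact card_pos.mpr ⟨e.2, this⟩
  have hPtVs : ∀ v ∈ (u :: q).tail, v ∈ Vs := by
    intro v hv
    rw [← pathEdges_map_snd'] at hv
    obtain ⟨e, heL, hev⟩ := List.mem_map.mp hv
    have heE : e ∈ E := hsubF (List.mem_toFinset.mpr heL)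
    rw [← hev]
    exact (hE_sub e heE).2
  -- vertex degree facts
  have fu_in : dIn E' u = 0 := by rw [hdIn' u, if_neg hu_tail]; omega
  have fu_out : dOut E' u = 0 := by rw [hdOut' u, if_pos hu_drop]; omega
  have fw_in : dIn E' w = 0 := by rw [hdIn' w, if_pos hw_tail]; omega
  have fw_out : dOut E' w = 0 := by rw [hdOut' w, if_neg hw_drop]; omega
  have fnon : ∀ v, v ∉ (u :: q) → dIn E' v = dIn E v ∧ dOut E' v = dOut E v := by
    intro v hv
    have h1 : v ∉ (u :: q).tail := fun h => hv (((hmem_split2 v).mpr (Or.inr h)))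
    have h2 : v ∉ (u :: q).dropLast := fun h => hv ((hmem_split v).mpr (Or.inl h))
    rw [hdIn' v, if_neg h1, hdOut' v, if_neg h2]
    omega
  have fmid : ∀ v, v ∈ (u :: q) → v ≠ u → v ≠ w →
      dIn E' v = dIn E v - 1 ∧ dOut E' v = dOut E v - 1 ∧
        dIn E v = dOut E v ∧ 1 ≤ dIn E v := by
    intro v hv hvu hvw
    have h1 : v ∈ (u :: q).tail := ((hmem_split2 v).mp hv).resolve_left hvu
    have h2 : v ∈ (u :: q).dropLast := ((hmem_split v).mp hv).resolve_right hvw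
    have h3 : 1 ≤ dIn E v := hInPos v h1
    have h4 : 1 ≤ dOut E v := hOutPos v h2
    have h5 : v ∈ Vs := hPtVs v h1
    have h6 : v ∉ InSet Vs E := by
      intro h; have := (mem_filter.mp h).2; omega
    have h7 : v ∉ OutSet Vs E := by
      intro h; have := (mem_filter.mp h).2; omega
    have h8 := hbal v h5 h6 h7
    rw [hdIn' v, if_pos h1, hdOut' v, if_pos h2]
    exact ⟨rfl, rfl, h8, h3⟩
  -- the key set identities
  have hIn'_eq : InSet Vs' E' = (InSet Vs E).erase u := by
    ext v
    simp only [InSet, hVs'def, mem_filter, mem_erase]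
    constructor
    · rintro ⟨⟨hvVs, hviso⟩, hvin⟩
      have hvout : dOut E' v ≠ 0 := fun h => hviso ⟨hvin, h⟩
      by_cases hvP : v ∈ (u :: q)
      · by_cases hvu : v = u
        · subst hvu; exact absurd fu_out hvout
        · by_cases hvw : v = w
          · subst hvw; exact absurd fw_out hvout
          · obtain ⟨h1, h2, h3, h4⟩ := fmid v hvP hvu hvw
            omega
      · obtain ⟨h1, h2⟩ := fnon v hvP
        exact ⟨fun hvu => hvP (hvu ▸ List.mem_cons_self (a := u) (l := q)), hvVs, by omega⟩
    · rintro ⟨hvu, hvVs, hvin⟩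
      have hvP : v ∉ (u :: q) := by
        intro hvP
        rcases (hmem_split2 v).mp hvP with h | h
        · exact hvu h
        · have := hInPos v h; omega
      obtain ⟨h1, h2⟩ := fnon v hvP
      have hvout : dOut E v = 1 := hin1 v (mem_filter.mpr ⟨hvVs, hvin⟩)
      exact ⟨⟨hvVs, fun hiso => by omega⟩, by omega⟩
  have hOut'_eq : OutSet Vs' E' = (OutSet Vs E).erase w := by
    ext v
    simp only [OutSet, hVs'def, mem_filter, mem_erase]
    constructor
    · rintro ⟨⟨hvVs, hviso⟩, hvout⟩
      have hvin : dIn E' v ≠ 0 := fun h => hviso ⟨h, hvout⟩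
      by_cases hvP : v ∈ (u :: q)
      · by_cases hvu : v = u
        · subst hvu; exact absurd fu_in hvin
        · by_cases hvw : v = w
          · subst hvw; exact absurd fw_in hvin
          · obtain ⟨h1, h2, h3, h4⟩ := fmid v hvP hvu hvw
            omega
      · obtain ⟨h1, h2⟩ := fnon v hvP
        exact ⟨fun hvw => hvP ((hmem_split v).mpr (Or.inr hvw)), hvVs, by omega⟩
    · rintro ⟨hvw, hvVs, hvout⟩
      have hvP : v ∉ (u :: q) := by
        intro hvP
        rcases (hmem_split v).mp hvP with h | h
        · have := hOutPos v h; omega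
        · exact hvw h
      obtain ⟨h1, h2⟩ := fnon v hvP
      have hvin : dIn E v = 1 := hout1 v (mem_filter.mpr ⟨hvVs, hvout⟩)
      exact ⟨⟨hvVs, fun hiso => by omega⟩, by omega⟩
  have huIn' : u ∈ InSet Vs E := hu
  have hwOut' : w ∈ OutSet Vs E := hw
  have hIncard : (InSet Vs' E').card = t := by
    rw [hIn'_eq, card_erase_of_mem huIn', hcard]
    omega
  have hOutcard : (OutSet Vs' E').card = t := by
    rw [hOut'_eq, card_erase_of_mem hwOut', hOutCard]
    omega

  refine ⟨⟨?_, ?_, ?_, ?_, ?_, ?_⟩, hIncard, hOutcard⟩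
  · -- edges of E' lie in Vs'
    intro e he
    have heE : e ∈ E := (mem_sdiff.mp he).1
    have h1 : dOut E' e.1 ≠ 0 := by
      have hmem : e.2 ∈ univ.filter fun b => (e.1, b) ∈ E' := by
        simp only [mem_filter, mem_univ, true_and]
        rwa [Prod.mk.eta]
      rw [dOut]
      exact Nat.pos_iff_ne_zero.mp (card_pos.mpr ⟨e.2, hmem⟩)
    have h2 : dIn E' e.2 ≠ 0 := by
      have : e.1 ∈ univ.filter fun a => (a, e.2) ∈ E' := by
        simp only [mem_filter, mem_univ, true_and]
        rwa [Prod.mk.eta]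
      rw [dIn]
      exact Nat.pos_iff_ne_zero.mp (card_pos.mpr ⟨e.1, this⟩)
    constructor
    · exact mem_filter.mpr ⟨(hE_sub e heE).1, fun hiso => h1 hiso.2⟩
    · exact mem_filter.mpr ⟨(hE_sub e heE).2, fun hiso => h2 hiso.1⟩
  · -- E' nonempty
    intro hE'empty
    obtain ⟨v, hv⟩ := card_pos.mp (by omega : 0 < (InSet Vs' E').card)
    have hviso := (mem_filter.mp (mem_filter.mp hv).1).2
    have hvin : dIn E' v = 0 := (mem_filter.mp hv).2
    have hvout : dOut E' v ≠ 0 := fun h => hviso ⟨hvin, h⟩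
    rw [hE'empty] at hvout
    simp [dOut] at hvout
  · -- dag
    intro v hv
    exact hdag v (Relation.TransGen.mono (fun a b hab => (mem_sdiff.mp hab).1) _ _ hv)
  · -- inputs have out-degree 1
    intro v hv
    rw [hIn'_eq, mem_erase] at hv
    obtain ⟨hvu, hvIn⟩ := hv
    have hvP : v ∉ (u :: q) := by
      intro hvP
      rcases (hmem_split2 v).mp hvP with h | h
      · exact hvu h
      · have := hInPos v h
        have := (mem_filter.mp hvIn).2
        omega
    rw [(fnon v hvP).2]
    exact hin1 v hvIn
  · -- outputs have in-degree 1
    intro v hv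
    rw [hOut'_eq, mem_erase] at hv
    obtain ⟨hvw, hvOut⟩ := hv
    have hvP : v ∉ (u :: q) := by
      intro hvP
      rcases (hmem_split v).mp hvP with h | h
      · have := hOutPos v h
        have := (mem_filter.mp hvOut).2
        omega
      · exact hvw h
    rw [(fnon v hvP).1]
    exact hout1 v hvOut
  · -- balance
    intro v hvVs' hvnotIn hvnotOut
    have hvVs : v ∈ Vs := (mem_filter.mp hvVs').1
    have hvin : dIn E' v ≠ 0 := by
      intro h
      exact hvnotIn (mem_filter.mpr ⟨hvVs', h⟩)
    have hvout : dOut E' v ≠ 0 := by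
      intro h
      exact hvnotOut (mem_filter.mpr ⟨hvVs', h⟩)
    by_cases hvP : v ∈ (u :: q)
    · by_cases hvu : v = u
      · subst hvu; exact absurd fu_in hvin
      · by_cases hvw : v = w
        · subst hvw; exact absurd fw_out hvout
        · obtain ⟨h1, h2, h3, h4⟩ := fmid v hvP hvu hvw
          omega
    · obtain ⟨h1, h2⟩ := fnon v hvP
      have h3 : v ∉ InSet Vs E := by
        intro h; have := (mem_filter.mp h).2; omega
      have h4 : v ∉ OutSet Vs E := by
        intro h; have := (mem_filter.mp h).2; omega
      rw [h1, h2]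
      exact hbal v hvVs h3 h4
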